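/- arXiv:1105.2677 — 5 statements merged into one kernel-verified Lean document; each statement's English description precedes it below -/
import Mathlib

section
/- Let ρ and σ be Eulerian equivalent orientations of a finite graph G. If ρ is totally cyclic (admits no directed cut), then σ is also totally cyclic. -/
open Finset

/-- A multigraph on vertex type `V` with edge type `E`: each edge has two
(not necessarily distinct) endpoints, given with a reference orientation
from `fst` to `snd`. -/
structure Multigraph (V E : Type) where
  fst : E → V
  snd : E → V

namespace Multigraph

variable {V E : Type} [Fintype V] [Fintype E] [DecidableEq V] (G : Multigraph V E)

/-- An orientation of `G` is a choice, for each edge, of whether to keep (`false`)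
or reverse (`true`) the reference direction.  The source of edge `e` under
orientation `o`. -/
def src (o : E → Bool) (e : E) : V := if o e then G.snd e else G.fst e

/-- The target of edge `e` under orientation `o`. -/
def tgt (o : E → Bool) (e : E) : V := if o e then G.fst e else G.snd e

/-- The incidence number `ε(v,e)` of vertex `v` and edge `e` under orientation `o`:
`+1` if `e` enters `v`, `-1` if `e` leaves `v`, and `0` for loops and non-incident
edges (a loop contributes `+1` and `-1`, which cancel). -/
def inc (o : E → Bool) (v : V) (e : E) : ℤ :=
  (if G.tgt o e = v then 1 else 0) - (if G.src o e = v then 1 else 0)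

/-- `f : E → A` is a flow of `(G,o)` with values in the abelian group `A`:
the conservation law `∑_e ε(v,e) f(e) = 0` holds at every vertex `v`. -/
def IsFlow {A : Type} [AddCommGroup A] (o : E → Bool) (f : E → A) : Prop :=
  ∀ v : V, ∑ e : E, G.inc o v e • f e = 0

/-- The set of edges of the cut `[S, Sᶜ]`: edges with exactly one endpoint in `S`. -/
def cutEdges (S : Finset V) : Finset E :=
  Finset.univ.filter fun e => ¬ ((G.fst e ∈ S) ↔ (G.snd e ∈ S))

/-- `(G,o)` has a directed cut: a nonempty cut `[S,Sᶜ]` all of whose edges are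
directed from `S` to `Sᶜ`. -/
def HasDirectedCut (o : E → Bool) : Prop :=
  ∃ S : Finset V, (∃ e, e ∈ G.cutEdges S ∧ G.src o e ∈ S) ∧
    ∀ e ∈ G.cutEdges S, G.src o e ∈ S

/-- An orientation is totally cyclic if it admits no directed cut. -/
def TotallyCyclic (o : E → Bool) : Prop := ¬ G.HasDirectedCut o

/-- Two orientations are Eulerian equivalent if the spanning subgraph induced by
the edges on which they disagree is directed Eulerian (in-degree = out-degree at
every vertex) with respect to the first orientation. -/
def EulerianEquiv (o₁ o₂ : E → Bool) : Prop :=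
  ∀ v : V, ∑ e : E, (if o₁ e = o₂ e then 0 else G.inc o₁ v e) = 0

/-- The components relation: `v` and `w` are joined by an edge. -/
def rel (v w : V) : Prop :=
  ∃ e : E, (G.fst e = v ∧ G.snd e = w) ∨ (G.fst e = w ∧ G.snd e = v)

/-- The number of connected components `c(G)`. -/
noncomputable def numComponents : ℕ := Nat.card (Quot G.rel)

/-- The cycle rank `n(G) = |E| - |V| + c(G)`. -/
noncomputable def cycleRank : ℕ :=
  Fintype.card E + G.numComponents - Fintype.card V

/-- `G` is bridgeless: no cut consists of a single edge. -/
def Bridgeless : Prop := ∀ S : Finset V, (G.cutEdges S).card ≠ 1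

end Multigraph

namespace Multigraph

variable {V E : Type} [Fintype V] [Fintype E] [DecidableEq V] (G : Multigraph V E)

lemma sum_inc_over (o : E → Bool) (S : Finset V) (e : E) :
    ∑ v ∈ S, G.inc o v e =
      (if G.tgt o e ∈ S then (1 : ℤ) else 0) - (if G.src o e ∈ S then 1 else 0) := by
  simp [Multigraph.inc, Finset.sum_sub_distrib, Finset.sum_ite_eq' S]

lemma src_tgt_flip (o₁ o₂ : E → Bool) (e : E) (hne : ¬ o₁ e = o₂ e) :
    G.src o₁ e = G.tgt o₂ e ∧ G.tgt o₁ e = G.src o₂ e := by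
  cases h1 : o₁ e <;> cases h2 : o₂ e <;>
    simp_all [Multigraph.src, Multigraph.tgt]

lemma tgt_not_mem {σ : E → Bool} {S : Finset V} {e : E}
    (he : e ∈ G.cutEdges S) (hs : G.src σ e ∈ S) : G.tgt σ e ∉ S := by
  simp only [Multigraph.cutEdges, Finset.mem_filter] at he
  cases h2 : σ e <;> simp_all [Multigraph.src, Multigraph.tgt] <;> tauto

lemma agree_of_directedCut (ρ σ : E → Bool) (h : G.EulerianEquiv ρ σ)
    (S : Finset V) (hall : ∀ e ∈ G.cutEdges S, G.src σ e ∈ S) :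
    ∀ e ∈ G.cutEdges S, ρ e = σ e := by
  classical
  have key : ∑ e : E, (if ρ e = σ e then 0 else ∑ v ∈ S, G.inc ρ v e) = 0 := by
    have hsw : ∀ e : E, (if ρ e = σ e then 0 else ∑ v ∈ S, G.inc ρ v e)
        = ∑ v ∈ S, (if ρ e = σ e then 0 else G.inc ρ v e) := by
      intro e; split <;> simp
    simp_rw [hsw]
    rw [Finset.sum_comm]
    exact Finset.sum_eq_zero fun v _ => h v
  have hterm : ∀ e : E, (if ρ e = σ e then 0 else ∑ v ∈ S, G.inc ρ v e) =
      (if ρ e = σ e ∨ e ∉ G.cutEdges S then 0 else 1) := by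
    intro e
    by_cases hag : ρ e = σ e
    · simp [hag]
    · rw [if_neg hag, G.sum_inc_over, (G.src_tgt_flip ρ σ e hag).1,
        (G.src_tgt_flip ρ σ e hag).2]
      by_cases hc : e ∈ G.cutEdges S
      · have h1 := hall e hc
        have h2 := G.tgt_not_mem hc h1
        simp [h1, h2, hag, hc]
      · have : (G.fst e ∈ S) ↔ (G.snd e ∈ S) := by
          by_contra hcon
          exact hc (by simp [Multigraph.cutEdges, hcon])
        have hst : (G.src σ e ∈ S) ↔ (G.tgt σ e ∈ S) := by
          cases h2 : σ e <;> simp_all [Multigraph.src, Multigraph.tgt]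
        simp only [hag, hc, or_self, not_true_eq_false, if_false, if_neg]
        by_cases hm : G.src σ e ∈ S
        · simp [hm, hst.mp hm]
        · have hm2 : G.tgt σ e ∉ S := fun hh => hm (hst.mpr hh)
          simp [hm, hm2]
  rw [Finset.sum_congr rfl fun e _ => hterm e] at key
  intro e he
  by_contra hne
  have hpos : ∀ e' ∈ (Finset.univ : Finset E),
      (0:ℤ) ≤ (if ρ e' = σ e' ∨ e' ∉ G.cutEdges S then 0 else 1) := by
    intro e' _; split <;> norm_num
  have := (Finset.sum_eq_zero_iff_of_nonneg hpos).mp key e (Finset.mem_univ e)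
  rw [if_neg (by tauto)] at this
  norm_num at this

end Multigraph

/-- if two orientations are Eulerian equivalent and one of them is
totally cyclic (no directed cut), then so is the other. -/
theorem totallyCyclic_of_eulerianEquiv {V E : Type} [Fintype V] [Fintype E]
    [DecidableEq V] (G : Multigraph V E) (ρ σ : E → Bool)
    (h : G.EulerianEquiv ρ σ) (hρ : G.TotallyCyclic ρ) : G.TotallyCyclic σ := by
  rintro ⟨S, ⟨e₀, he₀, hsrc₀⟩, hall⟩
  have hag := G.agree_of_directedCut ρ σ h S hall
  have hsrc : ∀ e ∈ G.cutEdges S, G.src ρ e = G.src σ e := by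
    intro e he; unfold Multigraph.src; rw [hag e he]
  exact hρ ⟨S, ⟨e₀, he₀, (hsrc e₀ he₀) ▸ hsrc₀⟩,
    fun e he => (hsrc e he) ▸ hall e he⟩
end

section
/- An orientation ε of a finite graph G admits a strictly positive real-valued flow (a flow f with f(e) > 0 for all edges e) if and only if ε is totally cyclic, i.e., (G,ε) contains no directed cut. -/
open Finset

namespace Multigraph

variable {V E : Type} [Fintype V] [Fintype E] [DecidableEq V] (G : Multigraph V E)

/-- Auxiliary: step relation of the oriented graph. -/
def step (o : E → Bool) (v w : V) : Prop :=
  ∃ e : E, G.src o e = v ∧ G.tgt o e = w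

lemma walkflow (o : E → Bool) {a b : V}
    (h : Relation.ReflTransGen (G.step o) a b) :
    ∃ g : E → ℤ, (∀ e, 0 ≤ g e) ∧
      ∀ v, ∑ e, G.inc o v e * g e
        = (if b = v then 1 else 0) - (if a = v then 1 else 0) := by
  classical
  induction h with
  | refl => exact ⟨0, fun e => le_refl 0, by simp⟩
  | tail hab hbc ih =>
    obtain ⟨g, hg0, hg⟩ := ih
    obtain ⟨e₀, hs, ht⟩ := hbc
    refine ⟨fun e => g e + (if e = e₀ then 1 else 0), ?_, ?_⟩
    · intro e
      have : (0:ℤ) ≤ (if e = e₀ then 1 else 0) := by split <;> norm_num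
      exact add_nonneg (hg0 e) this
    · intro v
      have h1 : ∑ e, G.inc o v e * (g e + (if e = e₀ then 1 else 0))
          = (∑ e, G.inc o v e * g e) + G.inc o v e₀ := by
        simp [mul_add, Finset.sum_add_distrib, mul_ite, Finset.sum_ite_eq']
      rw [h1, hg v, Multigraph.inc, hs, ht]
      ring

lemma src_reaches_tgt (o : E → Bool) (h : G.TotallyCyclic o) (e : E) :
    Relation.ReflTransGen (G.step o) (G.tgt o e) (G.src o e) := by
  classical
  by_contra hn
  apply h
  set S : Finset V := Finset.univ.filter
    (fun x => Relation.ReflTransGen (G.step o) (G.tgt o e) x) with hS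
  have hmem : ∀ x, x ∈ S ↔ Relation.ReflTransGen (G.step o) (G.tgt o e) x := by
    intro x; simp [hS]
  have key : ∀ e', G.src o e' ∈ S → G.tgt o e' ∈ S := by
    intro e' h'
    rw [hmem] at h' ⊢
    exact h'.tail ⟨e', rfl, rfl⟩
  have hcut : ∀ e', e' ∈ G.cutEdges Sᶜ ↔ ¬ (G.src o e' ∈ S ↔ G.tgt o e' ∈ S) := by
    intro e'
    simp only [Multigraph.cutEdges, Finset.mem_filter, Finset.mem_univ, true_and,
      Finset.mem_compl, Multigraph.src, Multigraph.tgt]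
    cases o e' <;> simp <;> tauto
  refine ⟨Sᶜ, ⟨e, ?_, ?_⟩, ?_⟩
  · rw [hcut]
    intro hi
    exact hn ((hmem _).mp (hi.mpr ((hmem _).mpr Relation.ReflTransGen.refl)))
  · rw [Finset.mem_compl]
    intro h'
    exact hn ((hmem _).mp h')
  · intro e' he'
    rw [hcut] at he'
    rw [Finset.mem_compl]
    intro hsrc
    exact he' ⟨fun _ => key e' hsrc, fun _ => hsrc⟩

lemma exists_pos_int_flow (o : E → Bool) (h : G.TotallyCyclic o) :
    ∃ f : E → ℤ, (∀ v, ∑ e, G.inc o v e * f e = 0) ∧ ∀ e, 0 < f e := by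
  classical
  choose g hg0 hg using fun e => G.walkflow o (G.src_reaches_tgt o h e)
  refine ⟨fun e => 1 + ∑ e', g e' e, ?_, ?_⟩
  · intro v
    have h1 : ∑ e, G.inc o v e * (1 + ∑ e', g e' e)
        = (∑ e, G.inc o v e) + ∑ e', ∑ e, G.inc o v e * g e' e := by
      simp only [mul_add, mul_one, Finset.sum_add_distrib, Finset.mul_sum]
      rw [Finset.sum_comm]
    rw [h1]
    have h2 : ∀ e', ∑ e, G.inc o v e * g e' e = - G.inc o v e' := by
      intro e'
      rw [hg e' v, Multigraph.inc]
      ring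
    simp only [h2, Finset.sum_neg_distrib]
    ring
  · intro e
    have : (0:ℤ) ≤ ∑ e', g e' e := Finset.sum_nonneg fun e' _ => hg0 e' e
    show (0:ℤ) < 1 + ∑ e', g e' e
    linarith

end Multigraph

/-- an orientation `ε` of a finite graph admits a strictly positive
real-valued flow iff it is totally cyclic (contains no directed cut). -/
theorem exists_positive_flow_iff_totallyCyclic {V E : Type} [Fintype V] [Fintype E]
    [DecidableEq V] (G : Multigraph V E) (ε : E → Bool) :
    (∃ f : E → ℝ, G.IsFlow ε f ∧ ∀ e : E, 0 < f e) ↔ G.TotallyCyclic ε := by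
  constructor
  · rintro ⟨f, hf, hfpos⟩ ⟨S, ⟨e₀, he₀c, he₀s⟩, hall⟩
    classical
    have hsum0 : ∑ e, ∑ v ∈ S, G.inc ε v e • f e = 0 := by
      rw [Finset.sum_comm]
      exact Finset.sum_eq_zero fun v _ => hf v
    have hco : ∀ e, ∑ v ∈ S, G.inc ε v e • f e
        = ((if G.tgt ε e ∈ S then (1:ℤ) else 0) - (if G.src ε e ∈ S then 1 else 0)) • f e := by
      intro e
      rw [← Finset.sum_smul]
      congr 1
      simp [Multigraph.inc, Finset.sum_sub_distrib, Finset.sum_ite_eq]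
    simp only [hco] at hsum0
    have hiff : ∀ e, e ∈ G.cutEdges S ↔ ¬ (G.src ε e ∈ S ↔ G.tgt ε e ∈ S) := by
      intro e
      simp only [Multigraph.cutEdges, Finset.mem_filter, Finset.mem_univ, true_and,
        Multigraph.src, Multigraph.tgt]
      cases ε e <;> simp <;> tauto
    have hle : ∀ e : E,
        ((if G.tgt ε e ∈ S then (1:ℤ) else 0) - (if G.src ε e ∈ S then 1 else 0)) • f e ≤ 0 := by
      intro e
      by_cases hc : e ∈ G.cutEdges S
      · have hs := hall e hc
        have ht : G.tgt ε e ∉ S := fun ht => (hiff e).mp hc ⟨fun _ => ht, fun _ => hs⟩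
        simp only [hs, ht, if_pos, if_neg, if_true, if_false, zero_sub, neg_smul, one_smul,
          neg_nonpos]
        exact (hfpos e).le
      · have hiff2 : G.src ε e ∈ S ↔ G.tgt ε e ∈ S := by
          by_contra hne; exact hc ((hiff e).mpr hne)
        by_cases hs : G.src ε e ∈ S
        · simp [hs, hiff2.mp hs]
        · have ht : G.tgt ε e ∉ S := fun h' => hs (hiff2.mpr h')
          simp [hs, ht]
    have hlt : ((if G.tgt ε e₀ ∈ S then (1:ℤ) else 0)
        - (if G.src ε e₀ ∈ S then 1 else 0)) • f e₀ < 0 := by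
      have ht : G.tgt ε e₀ ∉ S := fun ht => (hiff e₀).mp he₀c ⟨fun _ => ht, fun _ => he₀s⟩
      simp only [he₀s, ht, if_pos, if_neg, if_true, if_false, zero_sub, neg_smul, one_smul,
        neg_neg, neg_lt_zero]
      exact hfpos e₀
    have : ∑ e, ((if G.tgt ε e ∈ S then (1:ℤ) else 0)
        - (if G.src ε e ∈ S then 1 else 0)) • f e < ∑ _e : E, (0:ℝ) :=
      Finset.sum_lt_sum (fun i _ => hle i) ⟨e₀, Finset.mem_univ e₀, hlt⟩
    rw [Finset.sum_const, smul_zero, hsum0] at this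
    exact lt_irrefl 0 this
  · intro h
    obtain ⟨f, hf, hfpos⟩ := G.exists_pos_int_flow ε h
    refine ⟨fun e => (f e : ℝ), ?_, fun e => by
      show (0:ℝ) < (f e : ℝ)
      exact_mod_cast hfpos e⟩
    intro v
    have h1 := hf v
    have h2 : ((∑ e, G.inc ε v e * f e : ℤ) : ℝ) = 0 := by rw [h1]; norm_num
    push_cast at h2
    simpa [zsmul_eq_mul] using h2
end

section
/- Let G be a finite graph with orientation ε, and let Δ(G,ε) = {f ∈ F(G,ε;ℝ) : 0 < |f(e)| < 1 for all e}. Then Δ(G,ε) is the disjoint union over all orientations ρ of G of the sets Δ^ρ(G,ε) = {f ∈ F(G,ε;ℝ) : 0 < [ρ,ε](e) f(e) < 1 for all e}, and only the totally cyclic orientations ρ contribute nonempty pieces. -/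
open Finset

/-- The coupling `[ρ,σ](e)`: `+1` if the orientations agree on `e`, `-1` otherwise. -/
def Multigraph.coupling {E : Type} (ρ σ : E → Bool) (e : E) : ℝ :=
  if ρ e = σ e then 1 else -1

/-- The relatively open piece `Δ^ρ(G,ε) = {f flow : 0 < [ρ,ε](e) f(e) < 1}`. -/
def Multigraph.openPiece {V E : Type} [Fintype V] [Fintype E] [DecidableEq V]
    (G : Multigraph V E) (ε ρ : E → Bool) : Set (E → ℝ) :=
  {f | G.IsFlow ε f ∧ ∀ e : E,
    0 < Multigraph.coupling ρ ε e * f e ∧ Multigraph.coupling ρ ε e * f e < 1}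

/-- the set `Δ(G,ε) = {f flow : 0 < |f(e)| < 1}` is the disjoint
union, over all orientations `ρ` of `G`, of the pieces `Δ^ρ(G,ε)`, and only
totally cyclic orientations contribute nonempty pieces. -/
theorem openFlowSet_decomposition {V E : Type} [Fintype V] [Fintype E]
    [DecidableEq V] (G : Multigraph V E) (ε : E → Bool) :
    ({f : E → ℝ | G.IsFlow ε f ∧ ∀ e : E, 0 < |f e| ∧ |f e| < 1} =
        ⋃ ρ : E → Bool, G.openPiece ε ρ) ∧
    (∀ ρ₁ ρ₂ : E → Bool, ρ₁ ≠ ρ₂ → Disjoint (G.openPiece ε ρ₁) (G.openPiece ε ρ₂)) ∧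
    (∀ ρ : E → Bool, (G.openPiece ε ρ).Nonempty → G.TotallyCyclic ρ) := by
  classical
  refine ⟨?_, ?_, ?_⟩
  · ext f
    simp only [Set.mem_setOf_eq, Set.mem_iUnion, Multigraph.openPiece]
    constructor
    · rintro ⟨hf, hb⟩
      refine ⟨fun e => if 0 < f e then ε e else !ε e, hf, fun e => ?_⟩
      obtain ⟨h0, h1⟩ := hb e
      by_cases h : 0 < f e
      · have : Multigraph.coupling (fun e => if 0 < f e then ε e else !ε e) ε e = 1 := by
          simp [Multigraph.coupling, h]
        rw [this, one_mul]
        exact ⟨h, by rwa [abs_of_pos h] at h1⟩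
      · have hne : f e ≠ 0 := fun h' => by simp [h'] at h0
        have hneg : f e < 0 := lt_of_le_of_ne (not_lt.mp h) hne
        have : Multigraph.coupling (fun e => if 0 < f e then ε e else !ε e) ε e = -1 := by
          simp [Multigraph.coupling, h]
        rw [this]
        constructor
        · nlinarith
        · rw [abs_of_neg hneg] at h1; nlinarith
    · rintro ⟨ρ, hf, hb⟩
      refine ⟨hf, fun e => ?_⟩
      obtain ⟨h0, h1⟩ := hb e
      have habs : |f e| = Multigraph.coupling ρ ε e * f e := by
        unfold Multigraph.coupling at *
        by_cases h : ρ e = ε e <;> simp [h] at h0 h1 ⊢ <;> linarith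
      rw [habs]; exact ⟨h0, h1⟩
  · intro ρ₁ ρ₂ hne
    rw [Set.disjoint_left]
    rintro f ⟨-, hb₁⟩ ⟨-, hb₂⟩
    obtain ⟨e, he⟩ := Function.ne_iff.mp hne
    have h1 := (hb₁ e).1
    have h2 := (hb₂ e).1
    unfold Multigraph.coupling at h1 h2
    by_cases h : ρ₁ e = ε e
    · have h' : ρ₂ e ≠ ε e := fun hh => he (h.trans hh.symm)
      simp [h, h'] at h1 h2; linarith
    · have h' : ρ₂ e = ε e := by
        cases hε : ε e <;> cases h₁ : ρ₁ e <;> cases h₂ : ρ₂ e <;> simp_all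
      simp [h, h'] at h1 h2; linarith
  · rintro ρ ⟨f, hf, hb⟩ ⟨S, ⟨e₀, he₀cut, he₀src⟩, hall⟩
    set g : E → ℝ := fun e => Multigraph.coupling ρ ε e * f e with hg
    have hgpos : ∀ e, 0 < g e := fun e => (hb e).1
    have hflow : ∀ v, ∑ e : E, G.inc ρ v e • g e = 0 := by
      intro v
      rw [← hf v]
      apply Finset.sum_congr rfl
      intro e _
      simp only [hg]
      rcases Bool.eq_false_or_eq_true (ρ e) with hρ | hρ <;>
        rcases Bool.eq_false_or_eq_true (ε e) with hε | hε <;>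
        by_cases h1 : G.fst e = v <;> by_cases h2 : G.snd e = v <;>
        simp [hρ, hε, h1, h2, Multigraph.inc, Multigraph.src, Multigraph.tgt,
          Multigraph.coupling, zsmul_eq_mul]
    have hsum : ∑ e : E, ∑ v ∈ S, G.inc ρ v e • g e = 0 := by
      rw [← Finset.sum_comm]
      exact Finset.sum_eq_zero fun v _ => hflow v
    have hval : ∀ e : E, ∑ v ∈ S, G.inc ρ v e • g e
        = if e ∈ G.cutEdges S then -(g e) else 0 := by
      intro e
      rw [← Finset.sum_smul]
      have hinner : ∑ v ∈ S, G.inc ρ v e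
          = (if G.tgt ρ e ∈ S then 1 else 0) - (if G.src ρ e ∈ S then 1 else 0) := by
        simp [Multigraph.inc, Finset.sum_sub_distrib, Finset.sum_ite_eq S,
          Finset.sum_ite_eq' S]
      rw [hinner]
      by_cases hc : e ∈ G.cutEdges S
      · have hsrc := hall e hc
        have hcut : ¬ ((G.fst e ∈ S) ↔ (G.snd e ∈ S)) := by
          simpa [Multigraph.cutEdges] using hc
        have htgt : G.tgt ρ e ∉ S := by
          unfold Multigraph.src at hsrc
          unfold Multigraph.tgt
          rcases Bool.eq_false_or_eq_true (ρ e) with hρ | hρ <;>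
            simp [hρ] at hsrc ⊢ <;> tauto
        simp [htgt, hsrc, hc]
      · have hcut : (G.fst e ∈ S) ↔ (G.snd e ∈ S) := by
          by_contra h
          exact hc (by simpa [Multigraph.cutEdges] using h)
        have : (G.tgt ρ e ∈ S) ↔ (G.src ρ e ∈ S) := by
          unfold Multigraph.src Multigraph.tgt
          rcases Bool.eq_false_or_eq_true (ρ e) with hρ | hρ <;> simp [hρ] <;> tauto
        by_cases h1 : G.src ρ e ∈ S <;> simp [this, h1, hc]
    rw [Finset.sum_congr rfl fun e _ => hval e] at hsum
    have : ∑ e : E, (if e ∈ G.cutEdges S then -(g e) else 0)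
        = -∑ e ∈ G.cutEdges S, g e := by
      rw [← Finset.sum_neg_distrib, Finset.sum_ite_mem, Finset.univ_inter]
    rw [this] at hsum
    have hpos : 0 < ∑ e ∈ G.cutEdges S, g e :=
      Finset.sum_pos (fun e _ => hgpos e) ⟨e₀, he₀cut⟩
    linarith
end

section
/- (Tutte) Let G be a finite graph with orientation ε and q a positive integer. The reduction-mod-q map from nowhere-zero integer q-flows of (G,ε) (integer flows f with 0 < |f(e)| < q for all e) onto nowhere-zero ℤ/qℤ-flows of (G,ε) is surjective. Consequently every ℤ/qℤ-flow lifts to an integer flow with all values of absolute value less than q. -/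
open Finset

namespace TutteAux

open Multigraph

variable {V E : Type} [Fintype V] [Fintype E] [DecidableEq V]
variable (G : Multigraph V E) (ε : E → Bool)

/-- Divergence of `f` at `v`. -/
def div (f : E → ℤ) (v : V) : ℤ := ∑ e : E, G.inc ε v e • f e

lemma div_add (f₁ f₂ : E → ℤ) (v : V) :
    div G ε (fun e => f₁ e + f₂ e) v = div G ε f₁ v + div G ε f₂ v := by
  simp [div, smul_eq_mul, mul_add, Finset.sum_add_distrib]

lemma div_mul (c : ℤ) (f : E → ℤ) (v : V) :
    div G ε (fun e => c * f e) v = c * div G ε f v := by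
  simp only [div, smul_eq_mul, Finset.mul_sum]
  exact Finset.sum_congr rfl fun e _ => by ring

lemma div_single (e : E) (c : ℤ) (v : V) [DecidableEq E] :
    div G ε (fun e' => if e' = e then c else 0) v = G.inc ε v e * c := by
  simp [div, smul_eq_mul, mul_ite, mul_zero, Finset.sum_ite_eq']

lemma sum_div (f : E → ℤ) : ∑ v : V, div G ε f v = 0 := by
  unfold div
  rw [Finset.sum_comm]
  apply Finset.sum_eq_zero
  intro e _
  simp [Multigraph.inc, smul_eq_mul, sub_mul, Finset.sum_sub_distrib,
    Finset.sum_ite_eq]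

/-- Start vertex when traversing edge `e` in its pushable direction. -/
def wstart (f : E → ℤ) (e : E) : V := if f e < 0 then G.src ε e else G.tgt ε e
def wstop (f : E → ℤ) (e : E) : V := if f e < 0 then G.tgt ε e else G.src ε e

lemma inc_eq (f : E → ℤ) (v : V) (e : E) :
    (if f e < 0 then (1:ℤ) else -1) * G.inc ε v e
      = (if wstop G ε f e = v then 1 else 0) - (if wstart G ε f e = v then 1 else 0) := by
  by_cases h : f e < 0 <;> simp [wstart, wstop, Multigraph.inc, h] <;> ring

def IsWalk (f : E → ℤ) : V → V → List E → Prop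
  | x, y, [] => x = y
  | x, y, e :: l => f e ≠ 0 ∧ x = wstart G ε f e ∧ IsWalk f (wstop G ε f e) y l

lemma isWalk_append {f : E → ℤ} : ∀ (l₁ : List E) {l₂ x m y},
    IsWalk G ε f x m l₁ → IsWalk G ε f m y l₂ → IsWalk G ε f x y (l₁ ++ l₂)
  | [], l₂, x, m, y, h₁, h₂ => by cases h₁; exact h₂
  | e :: t, l₂, x, m, y, h₁, h₂ =>
    ⟨h₁.1, h₁.2.1, isWalk_append t h₁.2.2 h₂⟩

lemma isWalk_split {f : E → ℤ} : ∀ (l₁ : List E) {l₂ x y},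
    IsWalk G ε f x y (l₁ ++ l₂) → ∃ m, IsWalk G ε f x m l₁ ∧ IsWalk G ε f m y l₂
  | [], l₂, x, y, h => ⟨x, rfl, h⟩
  | e :: t, l₂, x, y, h => by
    obtain ⟨m, h₁, h₂⟩ := isWalk_split t h.2.2
    exact ⟨m, ⟨h.1, h.2.1, h₁⟩, h₂⟩

lemma isWalk_ne_zero {f : E → ℤ} : ∀ (l : List E) {x y},
    IsWalk G ε f x y l → ∀ e ∈ l, f e ≠ 0
  | [], _, _, _, _, he => by simp at he
  | e' :: t, x, y, h, e, he => by
    rcases List.mem_cons.mp he with rfl | he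
    · exact h.1
    · exact isWalk_ne_zero t h.2.2 e he

lemma isWalk_nodup {f : E → ℤ} : ∀ (n : ℕ) (l : List E) (x y : V),
    l.length ≤ n → IsWalk G ε f x y l →
    ∃ l', l'.Nodup ∧ l' ⊆ l ∧ IsWalk G ε f x y l'
  | n, [], x, y, _, h => ⟨[], List.nodup_nil, List.Subset.refl _, h⟩
  | 0, e :: t, x, y, hl, h => by simp at hl
  | n + 1, e :: t, x, y, hl, h => by
    obtain ⟨hne, hx, hw⟩ := h
    by_cases hmem : e ∈ t
    · obtain ⟨t₁, t₂, rfl⟩ := List.append_of_mem hmem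
      obtain ⟨m, hm₁, hm₂⟩ := isWalk_split G ε t₁ hw
      have hxy : IsWalk G ε f x y (e :: t₂) := ⟨hm₂.1, hx.trans hm₂.2.1.symm ▸ hm₂.2.1 ▸ rfl, hm₂.2.2⟩
      have hlen : (e :: t₂).length ≤ n := by
        simp only [List.length_cons, List.length_append] at hl ⊢; omega
      obtain ⟨l', hnd, hsub, hwalk⟩ := isWalk_nodup n (e :: t₂) x y hlen hxy
      refine ⟨l', hnd, ?_, hwalk⟩
      intro a ha
      rcases List.mem_cons.mp (hsub ha) with rfl | ha'
      · exact List.mem_cons_self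
      · exact List.mem_cons_of_mem _ (List.mem_append_right _ (List.mem_cons_of_mem _ ha'))
    · have hlen : t.length ≤ n := by simp only [List.length_cons] at hl; omega
      obtain ⟨l', hnd, hsub, hwalk⟩ := isWalk_nodup n t (wstop G ε f e) y hlen hw
      refine ⟨e :: l', List.nodup_cons.mpr ⟨fun hc => hmem (hsub hc), hnd⟩,
        List.cons_subset_cons _ hsub, hne, hx, hwalk⟩

open Classical in
/-- Net push count on each edge, for a walk given by edge list `l`. -/
noncomputable def pushDir (f : E → ℤ) (l : List E) (e : E) : ℤ :=
  if e ∈ l then (if f e < 0 then 1 else -1) else 0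

lemma pushDir_cases (f : E → ℤ) (l : List E) (hl : ∀ e ∈ l, f e ≠ 0) (e : E) :
    pushDir f l e = 0 ∨ (pushDir f l e = 1 ∧ f e < 0) ∨ (pushDir f l e = -1 ∧ 0 < f e) := by
  classical
  unfold pushDir
  by_cases hm : e ∈ l
  · by_cases hs : f e < 0
    · exact Or.inr (Or.inl ⟨by simp [hm, hs], hs⟩)
    · exact Or.inr (Or.inr ⟨by simp [hm, hs], lt_of_le_of_ne (not_lt.mp hs) (Ne.symm (hl e hm))⟩)
  · exact Or.inl (by simp [hm])

lemma div_pushDir (f : E → ℤ) : ∀ (l : List E) (x y : V), l.Nodup →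
    IsWalk G ε f x y l →
    ∀ v, div G ε (pushDir f l) v
      = (if y = v then 1 else 0) - (if x = v then 1 else 0)
  | [], x, y, _, h, v => by
    cases h
    simp [div, pushDir]
  | e :: t, x, y, hnd, h, v => by
    classical
    obtain ⟨hne, hx, hw⟩ := h
    have hent : e ∉ t := (List.nodup_cons.mp hnd).1
    have hndt : t.Nodup := (List.nodup_cons.mp hnd).2
    have heq : pushDir f (e :: t)
        = fun e' => pushDir f t e' + (if e' = e then (if f e < 0 then (1:ℤ) else -1) else 0) := by
      funext e'
      by_cases h1 : e' = e
      · subst h1; simp [pushDir, hent]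
      · simp [pushDir, h1, List.mem_cons]
    rw [heq, div_add, div_single, div_pushDir f t _ y hndt hw v]
    have := inc_eq G ε f v e
    rw [mul_comm] at this
    rw [this, hx]
    ring

def Reach (f : E → ℤ) (x y : V) : Prop := ∃ l, IsWalk G ε f x y l

lemma reach_extend {f : E → ℤ} {x : V} {e : E} (h : Reach G ε f x (wstart G ε f e))
    (hne : f e ≠ 0) : Reach G ε f x (wstop G ε f e) := by
  obtain ⟨l, hl⟩ := h
  exact ⟨l ++ [e], isWalk_append G ε l hl ⟨hne, rfl, rfl⟩⟩

lemma cut_lemma (f : E → ℤ) (x : V) (hx : 0 < div G ε f x)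
    (hnoneg : ∀ y, Reach G ε f x y → 0 ≤ div G ε f y) : False := by
  classical
  set X : Finset V := Finset.univ.filter (fun v => Reach G ε f x v) with hX
  have hxX : x ∈ X := by
    simp only [hX, Finset.mem_filter, Finset.mem_univ, true_and]
    exact ⟨[], rfl⟩
  -- closure of X under residual steps
  have hclosed : ∀ e : E, f e ≠ 0 → wstart G ε f e ∈ X → wstop G ε f e ∈ X := by
    intro e hne hmem
    simp only [hX, Finset.mem_filter, Finset.mem_univ, true_and] at hmem ⊢
    exact reach_extend G ε hmem hne
  -- the sum of divergences over X is nonpositive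
  have key : ∑ v ∈ X, div G ε f v ≤ 0 := by
    unfold div
    rw [Finset.sum_comm]
    apply Finset.sum_nonpos
    intro e _
    have hsum : ∑ v ∈ X, G.inc ε v e • f e
        = ((if G.tgt ε e ∈ X then 1 else 0) - (if G.src ε e ∈ X then 1 else 0)) * f e := by
      simp only [Multigraph.inc, smul_eq_mul, sub_mul, Finset.sum_sub_distrib,
        ← Finset.sum_mul, Finset.sum_ite_eq]
    rw [hsum]
    by_cases ht : G.tgt ε e ∈ X <;> by_cases hs : G.src ε e ∈ X <;>
      simp only [ht, hs, if_true, if_false]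
    · ring_nf; exact le_refl 0
    · -- tgt ∈ X, src ∉ X : f e ≤ 0
      have hfe : f e ≤ 0 := by
        by_contra hpos
        push_neg at hpos
        have h1 : wstart G ε f e = G.tgt ε e := by
          simp [wstart, not_lt.mpr (le_of_lt hpos)]
        have h2 : wstop G ε f e = G.src ε e := by
          simp [wstop, not_lt.mpr (le_of_lt hpos)]
        exact hs (h2 ▸ hclosed e (ne_of_gt hpos) (h1 ▸ ht))
      linarith
    · -- src ∈ X, tgt ∉ X : 0 ≤ f e
      have hfe : 0 ≤ f e := by
        by_contra hneg
        push_neg at hneg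
        have h1 : wstart G ε f e = G.src ε e := by simp [wstart, hneg]
        have h2 : wstop G ε f e = G.tgt ε e := by simp [wstop, hneg]
        exact ht (h2 ▸ hclosed e (ne_of_lt hneg) (h1 ▸ hs))
      linarith
    · ring_nf; exact le_refl 0
  have pos : 0 < ∑ v ∈ X, div G ε f v := by
    apply Finset.sum_pos'
    · intro v hv
      simp only [hX, Finset.mem_filter, Finset.mem_univ, true_and] at hv
      exact hnoneg v hv
    · exact ⟨x, hxX, hx⟩
  linarith

lemma descent (q : ℕ) (hq : 0 < q) (f : E → ℤ) (hfq : ∀ e, |f e| < (q : ℤ))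
    (hdvd : ∀ v, (q : ℤ) ∣ div G ε f v) (hnz : ∃ v, div G ε f v ≠ 0) :
    ∃ f' : E → ℤ, (∀ e, |f' e| < (q : ℤ)) ∧
      (∀ e, f' e = f e ∨ f' e = f e + q ∨ f' e = f e - q) ∧
      (∀ v, (q : ℤ) ∣ div G ε f' v) ∧
      (∑ v : V, (div G ε f' v).natAbs) < ∑ v : V, (div G ε f v).natAbs := by
  classical
  have hq' : (0 : ℤ) < q := by exact_mod_cast hq
  -- find a vertex with positive divergence
  have hx : ∃ x, 0 < div G ε f x := by
    by_contra hc
    push_neg at hc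
    obtain ⟨v, hv⟩ := hnz
    exact hv ((Finset.sum_eq_zero_iff_of_nonpos (fun i _ => hc i)).mp
      (sum_div G ε f) v (Finset.mem_univ v))
  obtain ⟨x, hx⟩ := hx
  -- find a reachable vertex with negative divergence
  have hy : ∃ y, Reach G ε f x y ∧ div G ε f y < 0 := by
    by_contra hc
    push_neg at hc
    exact cut_lemma G ε f x hx (fun y hy => hc y hy)
  obtain ⟨y, ⟨l₀, hl₀⟩, hy⟩ := hy
  have hxy : x ≠ y := fun h => absurd (h ▸ hx) (not_lt.mpr (le_of_lt hy))
  obtain ⟨l, hnd, hsub, hwalk⟩ := isWalk_nodup G ε l₀.length l₀ x y (le_refl _) hl₀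
  have hdc := pushDir_cases f l (fun e he => isWalk_ne_zero G ε l hwalk e he)
  have hdiv : ∀ v, div G ε (fun e => f e + (q : ℤ) * pushDir f l e) v
      = div G ε f v + q * ((if y = v then 1 else 0) - (if x = v then 1 else 0)) := by
    intro v
    rw [div_add G ε f (fun e => (q : ℤ) * pushDir f l e) v, div_mul,
      div_pushDir G ε f l x y hnd hwalk v]
  refine ⟨fun e => f e + q * pushDir f l e, ?_, ?_, ?_, ?_⟩
  · intro e
    show |f e + (q : ℤ) * pushDir f l e| < (q : ℤ)
    rcases hdc e with h0 | ⟨h1, hs⟩ | ⟨h1, hs⟩ <;>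
      [rw [h0, mul_zero, add_zero]; rw [h1, mul_one]; rw [h1, mul_neg_one]] <;>
      have := abs_lt.mp (hfq e) <;> rw [abs_lt] <;>
      constructor <;> linarith [this.1, this.2]
  · intro e
    show f e + (q : ℤ) * pushDir f l e = f e ∨ f e + (q : ℤ) * pushDir f l e = f e + q ∨
      f e + (q : ℤ) * pushDir f l e = f e - q
    rcases hdc e with h0 | ⟨h1, _⟩ | ⟨h1, _⟩
    · exact Or.inl (by rw [h0, mul_zero, add_zero])
    · exact Or.inr (Or.inl (by rw [h1, mul_one]))
    · exact Or.inr (Or.inr (by rw [h1, mul_neg_one]; ring))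
  · intro v
    rw [hdiv v]
    exact dvd_add (hdvd v) (Dvd.intro _ rfl)
  · -- the total absolute divergence strictly decreases
    have hqx : (q : ℤ) ≤ div G ε f x := Int.le_of_dvd hx (hdvd x)
    have hqy : div G ε f y ≤ -(q : ℤ) := by
      have h2 : (q : ℤ) ≤ -div G ε f y := Int.le_of_dvd (by linarith) (hdvd y).neg_right
      linarith
    apply Finset.sum_lt_sum
    · intro v _
      rw [hdiv v]
      by_cases hvy : y = v
      · subst hvy
        rw [if_pos rfl, if_neg hxy, sub_zero, mul_one]
        omega
      · by_cases hvx : x = v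
        · subst hvx
          rw [if_neg hvy, if_pos rfl, zero_sub, mul_neg_one]
          omega
        · rw [if_neg hvy, if_neg hvx, sub_zero, mul_zero, add_zero]
    · refine ⟨x, Finset.mem_univ x, ?_⟩
      rw [hdiv x]
      rw [if_neg (fun h => hxy h.symm), if_pos rfl, zero_sub, mul_neg_one]
      omega

lemma flow_lift (q : ℕ) (hq : 0 < q) : ∀ (n : ℕ) (f : E → ℤ),
    (∀ e, |f e| < (q : ℤ)) → (∀ v, (q : ℤ) ∣ div G ε f v) →
    (∑ v : V, (div G ε f v).natAbs) = n →
    ∃ f' : E → ℤ, (∀ v, div G ε f' v = 0) ∧ (∀ e, |f' e| < (q : ℤ)) ∧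
      ∀ e, ((f' e : ZMod q) = (f e : ZMod q)) := by
  intro n
  induction n using Nat.strong_induction_on with
  | _ n ih =>
    intro f hfq hdvd hsum
    by_cases hz : ∀ v, div G ε f v = 0
    · exact ⟨f, hz, hfq, fun e => rfl⟩
    · push_neg at hz
      obtain ⟨f'', hb, hch, hdvd', hlt⟩ := descent G ε q hq f hfq hdvd hz
      obtain ⟨f', h1, h2, h3⟩ := ih _ (hsum ▸ hlt) f'' hb hdvd' rfl
      refine ⟨f', h1, h2, fun e => (h3 e).trans ?_⟩
      rcases hch e with h | h | h <;> rw [h] <;> push_cast <;>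
        simp [ZMod.natCast_self]

end TutteAux

/-- Tutte: for a positive integer `q`, reduction mod `q` maps the
nowhere-zero integer `q`-flows of `(G,ε)` onto the nowhere-zero `ℤ/qℤ`-flows;
and every `ℤ/qℤ`-flow lifts to an integer flow with all values of absolute value
less than `q`. -/
theorem modq_surjective_on_flows {V E : Type} [Fintype V] [Fintype E]
    [DecidableEq V] (G : Multigraph V E) (ε : E → Bool) (q : ℕ) (hq : 0 < q) :
    (∀ g : E → ZMod q, G.IsFlow ε g → (∀ e, g e ≠ 0) →
      ∃ f : E → ℤ, G.IsFlow ε f ∧ (∀ e, 0 < |f e| ∧ |f e| < (q : ℤ)) ∧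
        ∀ e, ((f e : ZMod q) = g e)) ∧
    (∀ g : E → ZMod q, G.IsFlow ε g →
      ∃ f : E → ℤ, G.IsFlow ε f ∧ (∀ e, |f e| < (q : ℤ)) ∧
        ∀ e, ((f e : ZMod q) = g e)) := by
  have : NeZero q := ⟨hq.ne'⟩
  have main : ∀ g : E → ZMod q, G.IsFlow ε g →
      ∃ f : E → ℤ, G.IsFlow ε f ∧ (∀ e, |f e| < (q : ℤ)) ∧
        ∀ e, ((f e : ZMod q) = g e) := by
    intro g hg
    set f₀ : E → ℤ := fun e => ((g e).val : ℤ) with hf₀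
    have hcast : ∀ e, ((f₀ e : ZMod q) = g e) := by
      intro e
      rw [hf₀]
      push_cast
      exact ZMod.natCast_rightInverse (g e)
    have hbound : ∀ e, |f₀ e| < (q : ℤ) := by
      intro e
      rw [hf₀, abs_of_nonneg (Int.natCast_nonneg _)]
      exact_mod_cast ZMod.val_lt (g e)
    have hdvd : ∀ v, (q : ℤ) ∣ TutteAux.div G ε f₀ v := by
      intro v
      rw [← ZMod.intCast_zmod_eq_zero_iff_dvd]
      have heq : ((TutteAux.div G ε f₀ v : ℤ) : ZMod q)
          = ∑ e : E, G.inc ε v e • g e := by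
        simp only [TutteAux.div, smul_eq_mul, Int.cast_sum, Int.cast_mul, zsmul_eq_mul]
        exact Finset.sum_congr rfl fun e _ => by rw [hcast e]
      rw [heq, hg v]
    obtain ⟨f, h1, h2, h3⟩ := TutteAux.flow_lift G ε q hq _ f₀ hbound hdvd rfl
    exact ⟨f, h1, h2, fun e => (h3 e).trans (hcast e)⟩
  refine ⟨?_, main⟩
  intro g hg hnz
  obtain ⟨f, h1, h2, h3⟩ := main g hg
  refine ⟨f, h1, fun e => ⟨abs_pos.mpr ?_, h2 e⟩, h3⟩
  intro h0
  apply hnz e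
  rw [← h3 e, h0]
  simp
end

section
/- Let f1, f2 be real q-flows of (G,ε) (real flows with |f_i(e)| < q for all e) with f1(e) ≡ f2(e) (mod q) for every edge e. Then the associated orientations ε_{f1} and ε_{f2} are Eulerian equivalent, where ε_f agrees with ε on edges where f > 0 and is reversed on edges where f ≤ 0. -/
open Finset

/-- The orientation `ε_f` associated with a real-valued function `f`: agrees with
`ε` on edges where `f > 0`, and is reversed on edges where `f ≤ 0`. -/
noncomputable def Multigraph.orientOf {E : Type} (ε : E → Bool) (f : E → ℝ) (e : E) : Bool :=
  if 0 < f e then ε e else !ε e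


lemma Multigraph.inc_congr' {V E : Type} [Fintype V] [Fintype E] [DecidableEq V]
    (G : Multigraph V E) {o o' : E → Bool} {e : E} (h : o e = o' e) (v : V) :
    G.inc o v e = G.inc o' v e := by
  unfold Multigraph.inc Multigraph.tgt Multigraph.src; rw [h]

lemma Multigraph.inc_neg' {V E : Type} [Fintype V] [Fintype E] [DecidableEq V]
    (G : Multigraph V E) {o o' : E → Bool} {e : E} (h : o e = !(o' e)) (v : V) :
    G.inc o v e = - G.inc o' v e := by
  rcases Bool.eq_false_or_eq_true (o' e) with h' | h' <;>
    simp [Multigraph.inc, Multigraph.tgt, Multigraph.src, h, h']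

/-- if `f₁, f₂` are real `q`-flows of `(G,ε)` (i.e. `|fᵢ(e)| < q`)
which are congruent mod `q` on every edge, then the associated orientations
`ε_{f₁}` and `ε_{f₂}` are Eulerian equivalent. -/
theorem orientOf_eulerianEquiv_of_congruent {V E : Type} [Fintype V] [Fintype E]
    [DecidableEq V] (G : Multigraph V E) (ε : E → Bool) (q : ℤ) (hq : 0 < q)
    (f₁ f₂ : E → ℝ) (h₁ : G.IsFlow ε f₁) (h₂ : G.IsFlow ε f₂)
    (hb₁ : ∀ e, |f₁ e| < (q : ℝ)) (hb₂ : ∀ e, |f₂ e| < (q : ℝ))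
    (hcong : ∀ e, ∃ k : ℤ, f₁ e - f₂ e = (k : ℝ) * (q : ℝ)) :
    G.EulerianEquiv (Multigraph.orientOf ε f₁) (Multigraph.orientOf ε f₂) := by
  intro v
  choose k hk using hcong
  have hq' : (0:ℝ) < q := by exact_mod_cast hq
  have key : ∀ e, (if Multigraph.orientOf ε f₁ e = Multigraph.orientOf ε f₂ e then 0
      else G.inc (Multigraph.orientOf ε f₁) v e) = k e * G.inc ε v e := by
    intro e
    have b1 := abs_lt.mp (hb₁ e)
    have b2 := abs_lt.mp (hb₂ e)
    have hke := hk e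
    by_cases h1 : 0 < f₁ e <;> by_cases h2 : 0 < f₂ e
    · have hk0 : k e = 0 := by
        have h3 : (-1:ℝ) < (k e : ℝ) ∧ ((k e : ℝ)) < 1 := by
          constructor <;> nlinarith
        have h4 : (-1:ℤ) < k e ∧ k e < 1 := by exact_mod_cast h3
        omega
      simp [Multigraph.orientOf, h1, h2, hk0]
    · have hk1 : k e = 1 := by
        have h3 : (0:ℝ) < (k e : ℝ) ∧ ((k e : ℝ)) < 2 := by
          constructor <;> nlinarith
        have h4 : (0:ℤ) < k e ∧ k e < 2 := by exact_mod_cast h3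
        omega
      rw [hk1, one_mul]
      have hcond : ¬ (Multigraph.orientOf ε f₁ e = Multigraph.orientOf ε f₂ e) := by
        simp [Multigraph.orientOf, h1, h2]
      rw [if_neg hcond]
      exact G.inc_congr' (by simp [Multigraph.orientOf, h1]) v
    · have hk1 : k e = -1 := by
        have h3 : (-2:ℝ) < (k e : ℝ) ∧ ((k e : ℝ)) < 0 := by
          constructor <;> nlinarith
        have h4 : (-2:ℤ) < k e ∧ k e < 0 := by exact_mod_cast h3
        omega
      rw [hk1]
      have hcond : ¬ (Multigraph.orientOf ε f₁ e = Multigraph.orientOf ε f₂ e) := by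
        simp [Multigraph.orientOf, h1, h2]
      rw [if_neg hcond]
      rw [G.inc_neg' (o' := ε) (by simp [Multigraph.orientOf, h1]) v]
      ring
    · have hk0 : k e = 0 := by
        have h3 : (-1:ℝ) < (k e : ℝ) ∧ ((k e : ℝ)) < 1 := by
          constructor <;> nlinarith
        have h4 : (-1:ℤ) < k e ∧ k e < 1 := by exact_mod_cast h3
        omega
      simp [Multigraph.orientOf, h1, h2, hk0]
  have hf : ∑ e, (G.inc ε v e : ℝ) * (f₁ e - f₂ e) = 0 := by
    have e1 := h₁ v
    have e2 := h₂ v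
    simp only [zsmul_eq_mul] at e1 e2
    simp only [mul_sub, Finset.sum_sub_distrib, e1, e2, sub_zero]
  have hsum : ∑ e, ((k e : ℝ) * (G.inc ε v e : ℝ)) * q = 0 := by
    rw [← hf]
    apply Finset.sum_congr rfl
    intro e _
    rw [hk e]; ring
  rw [← Finset.sum_mul] at hsum
  have h0 : ((∑ e, k e * G.inc ε v e : ℤ) : ℝ) = 0 := by
    rcases mul_eq_zero.mp hsum with h | h
    · push_cast; exact h
    · exact absurd h (ne_of_gt hq')
  have h0z : (∑ e, k e * G.inc ε v e : ℤ) = 0 := by exact_mod_cast h0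
  calc ∑ e, (if Multigraph.orientOf ε f₁ e = Multigraph.orientOf ε f₂ e then 0
      else G.inc (Multigraph.orientOf ε f₁) v e)
      = ∑ e, k e * G.inc ε v e := Finset.sum_congr rfl (fun e _ => key e)
    _ = 0 := h0z
end
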